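/- Let y : ℝ → ℝ be twice differentiable with y''(x) = x·y(x), suppose y is not identically zero, y² is integrable on every interval [x, ∞), and D₂(x) := x·y(x)² − y'(x)² tends to 0 as x → +∞. Then D₂(x) = −∫_x^∞ y(s)² ds < 0 for every real x. -/

import Mathlib

open MeasureTheory Filter

section aux
variable (y : ℝ → ℝ)

lemma airyD2_hasDerivAt (h1 : Differentiable ℝ y) (h2 : Differentiable ℝ (deriv y))
    (hairy : ∀ x : ℝ, deriv (deriv y) x = x * y x) (x : ℝ) :
    HasDerivAt (fun t : ℝ => t * y t ^ 2 - (deriv y t) ^ 2) (y x ^ 2) x := by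
  have hy : HasDerivAt y (deriv y x) x := (h1 x).hasDerivAt
  have hy' : HasDerivAt (deriv y) (x * y x) x := by
    have := (h2 x).hasDerivAt
    rwa [hairy x] at this
  have A : HasDerivAt (fun t : ℝ => t * y t ^ 2)
      (1 * y x ^ 2 + x * (2 * y x ^ (2-1) * deriv y x)) x :=
    (hasDerivAt_id x).mul (hy.pow 2)
  have B : HasDerivAt (fun t : ℝ => (deriv y t) ^ 2)
      (2 * (deriv y x) ^ (2-1) * (x * y x)) x := hy'.pow 2
  have := A.sub B
  exact this.congr_deriv (by ring)

/-- If `y` and `y'` vanish at a point, then `y` vanishes everywhere (Gronwall). -/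
lemma airy_unique (h1 : Differentiable ℝ y) (h2 : Differentiable ℝ (deriv y))
    (hairy : ∀ x : ℝ, deriv (deriv y) x = x * y x)
    {a : ℝ} (ha : y a = 0) (ha' : deriv y a = 0) (t : ℝ) (ht : t ≤ a) : y t = 0 := by
  set f : ℝ → ℝ := fun s => y s ^ 2 + (deriv y s) ^ 2 with hf
  -- backward function
  set g : ℝ → ℝ := fun u => f (a + t - u) with hg
  set K : ℝ := 1 + |a| + |t| with hK
  have hfd : ∀ s : ℝ, HasDerivAt f (2 * y s * deriv y s * (1 + s)) s := by
    intro s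
    have hy : HasDerivAt y (deriv y s) s := (h1 s).hasDerivAt
    have hy' : HasDerivAt (deriv y) (s * y s) s := by
      have := (h2 s).hasDerivAt; rwa [hairy s] at this
    have := (hy.pow 2).add (hy'.pow 2)
    exact this.congr_deriv (by ring)
  have hgd : ∀ u : ℝ, HasDerivAt g (-(2 * y (a+t-u) * deriv y (a+t-u) * (1 + (a+t-u)))) u := by
    intro u
    have h0 : HasDerivAt (fun u : ℝ => a + t - u) (-1) u := by
      simpa using (hasDerivAt_id u).const_sub (a+t)
    have := (hfd (a+t-u)).comp u h0
    exact this.congr_deriv (by ring)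
  have key : ∀ u ∈ Set.Icc t a, ‖g u‖ ≤ gronwallBound 0 K 0 (u - t) := by
    apply norm_le_gronwallBound_of_norm_deriv_right_le
      (f := g) (f' := fun u => -(2 * y (a+t-u) * deriv y (a+t-u) * (1 + (a+t-u))))
    · exact fun u _ => ((hgd u).continuousAt).continuousWithinAt
    · exact fun u _ => (hgd u).hasDerivWithinAt
    · simp [hg, hf, ha, ha']
    · intro u hu
      have hs : a + t - u ∈ Set.Icc t a := by
        constructor <;> [linarith [hu.2]; linarith [hu.1]]
      set s := a + t - u with hs'
      have h1s : |1 + s| ≤ K := by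
        rw [hK]
        rcases abs_le.mp (abs_le_max_abs_abs hs.1 hs.2) with ⟨l, r⟩
        have := le_max_left |a| |t|
        have := le_max_right |a| |t|
        rw [abs_le]
        constructor <;> cases' le_total |a| |t| with h h <;>
          simp [max_eq_left, max_eq_right, h] at l r ⊢ <;> nlinarith [abs_nonneg a, abs_nonneg t]
      have hamgm : 2 * |y s| * |deriv y s| ≤ f s := by
        have := sq_nonneg (|y s| - |deriv y s|)
        simp only [hf]
        nlinarith [sq_abs (y s), sq_abs (deriv y s)]
      have hfpos : 0 ≤ f s := by positivity
      have : ‖-(2 * y s * deriv y s * (1 + s))‖ ≤ K * f s := by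
        rw [norm_neg, Real.norm_eq_abs, abs_mul, abs_mul, abs_mul]
        have h2 : |(2:ℝ)| = 2 := by norm_num
        rw [h2]
        calc 2 * |y s| * |deriv y s| * |1 + s| ≤ f s * K := by
              apply mul_le_mul hamgm h1s (abs_nonneg _) hfpos
          _ = K * f s := mul_comm _ _
      calc ‖-(2 * y s * deriv y s * (1 + s))‖ ≤ K * f s := this
        _ = K * ‖g u‖ + 0 := by
            have hgnn : 0 ≤ g u := by simp only [hg, hf]; positivity
            rw [add_zero, Real.norm_eq_abs, abs_of_nonneg hgnn]
  have := key a ⟨ht, le_refl a⟩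
  rw [gronwallBound_ε0_δ0] at this
  have hga : g a = f t := by simp [hg]
  have hnn : 0 ≤ g a := by simp only [hg, hf]; positivity
  have hz : g a = 0 := le_antisymm (by simpa [Real.norm_eq_abs, abs_of_nonneg hnn] using this) hnn
  rw [hga] at hz
  simp only [hf] at hz
  have hy2 : y t ^ 2 = 0 := by nlinarith [sq_nonneg (y t), sq_nonneg (deriv y t)]
  exact pow_eq_zero_iff (n := 2) (by norm_num) |>.mp hy2

end aux

theorem airy_D2_neg (y : ℝ → ℝ)
    (h1 : Differentiable ℝ y) (h2 : Differentiable ℝ (deriv y))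
    (hairy : ∀ x : ℝ, deriv (deriv y) x = x * y x)
    (hnz : ∃ x : ℝ, y x ≠ 0)
    (hint : ∀ x : ℝ, IntegrableOn (fun s : ℝ => y s ^ 2) (Set.Ici x))
    (hlim : Tendsto (fun x : ℝ => x * y x ^ 2 - (deriv y x) ^ 2) atTop (nhds 0)) :
    ∀ x : ℝ, x * y x ^ 2 - (deriv y x) ^ 2 = -∫ s in Set.Ici x, y s ^ 2 ∧
      x * y x ^ 2 - (deriv y x) ^ 2 < 0 := by
  intro x
  set D : ℝ → ℝ := fun t => t * y t ^ 2 - (deriv y t) ^ 2 with hD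
  have hDd := airyD2_hasDerivAt y h1 h2 hairy
  have hcont : Continuous fun s : ℝ => y s ^ 2 := (h1.continuous.pow 2)
  -- FTC on [x, b]
  have hftc : ∀ b : ℝ, ∫ s in x..b, y s ^ 2 = D b - D x := by
    intro b
    exact intervalIntegral.integral_eq_sub_of_hasDerivAt
      (fun t _ => hDd t) (hcont.intervalIntegrable x b)
  have hIoi : IntegrableOn (fun s : ℝ => y s ^ 2) (Set.Ioi x) :=
    (hint x).mono_set Set.Ioi_subset_Ici_self
  have T1 : Tendsto (fun b : ℝ => ∫ s in x..b, y s ^ 2) atTop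
      (nhds (∫ s in Set.Ioi x, y s ^ 2)) :=
    intervalIntegral_tendsto_integral_Ioi x hIoi tendsto_id
  have T2 : Tendsto (fun b : ℝ => ∫ s in x..b, y s ^ 2) atTop (nhds (0 - D x)) := by
    simp only [hftc]
    exact hlim.sub_const (D x)
  have hIeq : (∫ s in Set.Ici x, y s ^ 2) = ∫ s in Set.Ioi x, y s ^ 2 :=
    integral_Ici_eq_integral_Ioi
  have heq : D x = -∫ s in Set.Ici x, y s ^ 2 := by
    have := tendsto_nhds_unique T1 T2
    rw [hIeq]; linarith
  refine ⟨heq, ?_⟩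
  show D x < 0
  rw [heq, neg_lt, neg_zero]
  -- positivity of the integral
  rw [setIntegral_pos_iff_support_of_nonneg_ae
    (Filter.Eventually.of_forall fun s => sq_nonneg (y s)) (hint x)]
  -- find a point s₀ ≥ x with y s₀ ≠ 0
  obtain ⟨x₀, hx₀⟩ := hnz
  have hex : ∃ s₀, x ≤ s₀ ∧ y s₀ ≠ 0 := by
    by_contra h
    push_neg at h
    have hz : ∀ s, x ≤ s → y s = 0 := h
    -- then y = 0 on Ici x; so y (x+1) = 0 and deriv y (x+1) = 0
    have hy1 : y (x + 1) = 0 := hz _ (by linarith)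
    have hder : deriv y (x + 1) = 0 := by
      have hmem : x + 1 ∈ Set.Ioi x := by simp
      have hev : y =ᶠ[nhds (x+1)] (fun _ => (0:ℝ)) :=
        Filter.eventuallyEq_of_mem (isOpen_Ioi.mem_nhds hmem)
          (fun s hs => hz s (le_of_lt hs))
      rw [hev.deriv_eq, deriv_const]
    have := airy_unique y h1 h2 hairy hy1 hder
    rcases le_or_gt x₀ (x+1) with hc | hc
    · exact hx₀ (this x₀ hc)
    · exact hx₀ (hz x₀ (by linarith))
  obtain ⟨s₀, hs₀x, hs₀⟩ := hex
  -- support contains a neighborhood of s₀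
  have hopen : IsOpen {s : ℝ | y s ≠ 0} :=
    isOpen_ne.preimage h1.continuous
  obtain ⟨ε, hε, hball⟩ := Metric.isOpen_iff.mp hopen s₀ hs₀
  have hsub : Set.Ioo s₀ (s₀ + ε) ⊆ Function.support (fun s : ℝ => y s ^ 2) ∩ Set.Ici x := by
    intro s hs
    constructor
    · have : s ∈ Metric.ball s₀ ε := by
        rw [Metric.mem_ball, Real.dist_eq, abs_lt]
        constructor <;> [linarith [hs.1]; linarith [hs.2]]
      have := hball this
      simp only [Function.mem_support]
      exact pow_ne_zero 2 this
    · exact le_trans hs₀x (le_of_lt hs.1)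
  calc (0:ENNReal) < volume (Set.Ioo s₀ (s₀ + ε)) := by
        rw [Real.volume_Ioo]; simp [hε]
    _ ≤ _ := measure_mono hsub
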